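/- For every dimension d ≥ 1, X_d^T X_d = ((d+1)/d) · I_d, where I_d is the d × d identity matrix. -/

import Mathlib

open Matrix

/-- The recursively defined matrix `X_d ∈ ℝ^{(d+1)×d}` whose rows are the vertices of a
regular simplex inscribed in the unit sphere of `ℝ^d`:  `X_1 = (-1; 1)`, and for `d > 1`,
the top-left `d × (d-1)` block of `X_d` is `R_d • X_{d-1}` with `R_d = √(d²-1)/d`, the last
column has its first `d` entries equal to `-1/d` and last entry `1`, and the last row is
`(0, …, 0, 1)`. -/
noncomputable def simplexPts : (d : ℕ) → Matrix (Fin (d + 1)) (Fin d) ℝ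
  | 0 => fun _ j => j.elim0
  | 1 => fun i _ => if (i : ℕ) = 0 then -1 else 1
  | (d + 2) => fun i j =>
      if hj : (j : ℕ) < d + 1 then
        if hi : (i : ℕ) < d + 2 then
          (Real.sqrt (((d : ℝ) + 2) ^ 2 - 1) / ((d : ℝ) + 2)) *
            simplexPts (d + 1) ⟨i, hi⟩ ⟨j, hj⟩
        else 0
      else if (i : ℕ) < d + 2 then -1 / ((d : ℝ) + 2) else 1

lemma simplexPts_colSum : ∀ (d : ℕ) (j : Fin (d + 1)),
    ∑ i : Fin (d + 2), simplexPts (d + 1) i j = 0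
  | 0, j => by
      simp [simplexPts, Fin.sum_univ_two]
  | (d + 1), j => by
      rw [Fin.sum_univ_castSucc]
      by_cases hj : (j : ℕ) < d + 1
      · have h1 : ∀ i : Fin (d + 2), simplexPts (d + 2) i.castSucc j
            = (Real.sqrt (((d : ℝ) + 2) ^ 2 - 1) / ((d : ℝ) + 2)) *
              simplexPts (d + 1) i ⟨j, hj⟩ := by
          intro i
          have hi : ((i.castSucc : Fin (d + 3)) : ℕ) < d + 2 := i.isLt
          simp [simplexPts, hj, hi]
        have h2 : simplexPts (d + 2) (Fin.last (d + 2)) j = 0 := by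
          simp [simplexPts, hj]
        rw [h2]
        simp only [h1, ← Finset.mul_sum, simplexPts_colSum d ⟨j, hj⟩]
        ring
      · have h1 : ∀ i : Fin (d + 2), simplexPts (d + 2) i.castSucc j
            = -1 / ((d : ℝ) + 2) := by
          intro i
          have hi : ((i.castSucc : Fin (d + 3)) : ℕ) < d + 2 := i.isLt
          simp [simplexPts, hj, hi]
        have h2 : simplexPts (d + 2) (Fin.last (d + 2)) j = 1 := by
          simp [simplexPts, hj]
        rw [h2]
        simp only [h1, Finset.sum_const, Finset.card_univ, Fintype.card_fin, nsmul_eq_mul]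
        push_cast
        field_simp
        ring

lemma simplexPts_aux : ∀ (d : ℕ),
    (simplexPts (d + 1))ᵀ * simplexPts (d + 1) =
      ((((d : ℝ) + 1) + 1) / ((d : ℝ) + 1)) • (1 : Matrix (Fin (d + 1)) (Fin (d + 1)) ℝ)
  | 0 => by
      ext j k
      fin_cases j; fin_cases k
      simp only [Matrix.mul_apply, Matrix.transpose_apply, Fin.sum_univ_two]
      simp [Matrix.mul_apply, simplexPts, Fin.sum_univ_two]
  | (d + 1) => by
      have hR : Real.sqrt (((d : ℝ) + 2) ^ 2 - 1) ^ 2 = ((d : ℝ) + 2) ^ 2 - 1 := by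
        rw [Real.sq_sqrt]
        nlinarith [Nat.cast_nonneg (α := ℝ) d]
      have hd2 : ((d : ℝ) + 2) ≠ 0 := by positivity
      have hd1 : ((d : ℝ) + 1) ≠ 0 := by positivity
      ext j k
      rw [Matrix.mul_apply]
      simp only [Matrix.transpose_apply, Matrix.smul_apply, Matrix.one_apply, smul_eq_mul]
      rw [Fin.sum_univ_castSucc]
      by_cases hj : (j : ℕ) < d + 1 <;> by_cases hk : (k : ℕ) < d + 1
      · -- both in the top-left block
        have h1 : ∀ i : Fin (d + 2),
            simplexPts (d + 2) i.castSucc j * simplexPts (d + 2) i.castSucc k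
            = (Real.sqrt (((d : ℝ) + 2) ^ 2 - 1) / ((d : ℝ) + 2)) ^ 2 *
              (simplexPts (d + 1) i ⟨j, hj⟩ * simplexPts (d + 1) i ⟨k, hk⟩) := by
          intro i
          have hi : ((i.castSucc : Fin (d + 3)) : ℕ) < d + 2 := i.isLt
          simp [simplexPts, hj, hk, hi]
          ring
        have h2 : simplexPts (d + 2) (Fin.last (d + 2)) j = 0 := by
          simp [simplexPts, hj]
        have hXX := congrFun (congrFun (simplexPts_aux d) ⟨j, hj⟩) ⟨k, hk⟩
        rw [Matrix.mul_apply] at hXX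
        simp only [Matrix.transpose_apply, Matrix.smul_apply, Matrix.one_apply,
          smul_eq_mul] at hXX
        rw [h2]
        simp only [h1, ← Finset.mul_sum, hXX]
        have hjk : (⟨(j : ℕ), hj⟩ : Fin (d + 1)) = ⟨(k : ℕ), hk⟩ ↔ j = k := by
          simp [Fin.ext_iff]
        by_cases hjke : j = k
        · simp only [hjk.mpr hjke, if_pos rfl, hjke, if_pos rfl, ↓reduceIte]
          rw [div_pow, hR]
          field_simp
          push_cast
          ring
        · rw [if_neg (fun h => hjke (hjk.mp h)), if_neg hjke]
          ring
      · -- j in block, k is the last column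
        have h1 : ∀ i : Fin (d + 2),
            simplexPts (d + 2) i.castSucc j * simplexPts (d + 2) i.castSucc k
            = (Real.sqrt (((d : ℝ) + 2) ^ 2 - 1) / ((d : ℝ) + 2) * (-1 / ((d : ℝ) + 2))) *
              simplexPts (d + 1) i ⟨j, hj⟩ := by
          intro i
          have hi : ((i.castSucc : Fin (d + 3)) : ℕ) < d + 2 := i.isLt
          simp [simplexPts, hj, hk, hi]
          ring
        have h2 : simplexPts (d + 2) (Fin.last (d + 2)) j = 0 := by
          simp [simplexPts, hj]
        have hne : j ≠ k := by
          intro h; rw [h] at hj; exact hk hj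
        rw [h2, if_neg hne]
        simp only [h1, ← Finset.mul_sum, simplexPts_colSum d ⟨j, hj⟩]
        ring
      · -- symmetric
        have h1 : ∀ i : Fin (d + 2),
            simplexPts (d + 2) i.castSucc j * simplexPts (d + 2) i.castSucc k
            = (Real.sqrt (((d : ℝ) + 2) ^ 2 - 1) / ((d : ℝ) + 2) * (-1 / ((d : ℝ) + 2))) *
              simplexPts (d + 1) i ⟨k, hk⟩ := by
          intro i
          have hi : ((i.castSucc : Fin (d + 3)) : ℕ) < d + 2 := i.isLt
          simp [simplexPts, hj, hk, hi]
          ring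
        have h2 : simplexPts (d + 2) (Fin.last (d + 2)) k = 0 := by
          simp [simplexPts, hk]
        have hne : j ≠ k := by
          intro h; rw [h] at hj; exact hj hk
        rw [h2, if_neg hne]
        simp only [h1, ← Finset.mul_sum, simplexPts_colSum d ⟨k, hk⟩]
        ring
      · -- both are the last column
        have h1 : ∀ i : Fin (d + 2),
            simplexPts (d + 2) i.castSucc j * simplexPts (d + 2) i.castSucc k
            = (-1 / ((d : ℝ) + 2)) ^ 2 := by
          intro i
          have hi : ((i.castSucc : Fin (d + 3)) : ℕ) < d + 2 := i.isLt
          simp [simplexPts, hj, hk, hi]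
          ring
        have h2j : simplexPts (d + 2) (Fin.last (d + 2)) j = 1 := by
          simp [simplexPts, hj]
        have h2k : simplexPts (d + 2) (Fin.last (d + 2)) k = 1 := by
          simp [simplexPts, hk]
        have hjk : j = k := by
          apply Fin.ext
          omega
        rw [h2j, h2k, if_pos hjk]
        simp only [h1, Finset.sum_const, Finset.card_univ, Fintype.card_fin, nsmul_eq_mul]
        push_cast
        field_simp
        ring

/-- for every `d ≥ 1`, `X_dᵀ X_d = ((d+1)/d) I_d`. -/
theorem simplexPts_transpose_mul_self (d : ℕ) (hd : 1 ≤ d) :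
    (simplexPts d)ᵀ * simplexPts d =
      (((d : ℝ) + 1) / (d : ℝ)) • (1 : Matrix (Fin d) (Fin d) ℝ) := by
  obtain ⟨e, rfl⟩ : ∃ e, d = e + 1 := ⟨d - 1, by omega⟩
  have := simplexPts_aux e
  push_cast at this ⊢
  convert this using 2
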